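/- Let n be an odd perfect number such that 15 divides n, 5^α exactly divides n, and 3^(2b) exactly divides n, for some positive integers α, b. If 3 divides (α+1)(2b+1), then n has a good prime divisor. -/

import Mathlib

set_option exponentiation.threshold 4000000000000
set_option maxRecDepth 4000


/-- Φ₃(x) = x² + x + 1, the third cyclotomic polynomial evaluated at x. -/
def Phi3 (x : ℕ) : ℕ := x ^ 2 + x + 1

/-- Σ, the set of primes congruent to 2 or 4 mod 7. -/
def SigmaSet : Set ℕ := {p | p.Prime ∧ (p % 7 = 2 ∨ p % 7 = 4)}

/-- T(x), the set of primes q ≠ 3 dividing Φ₃(x). -/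
def T (x : ℕ) : Set ℕ := {q | q.Prime ∧ q ≠ 3 ∧ q ∣ Phi3 x}

/-- The recursively defined sets S_n(p). -/
def S (p : ℕ) : ℕ → Set ℕ
  | 0 => {p}
  | n + 1 => S p n ∪ ⋃ x ∈ S p n, T x

/-- A prime p > 7 is good if S_n(p) ∩ Σ is nonempty for some n. -/
def IsGood (p : ℕ) : Prop := p.Prime ∧ 7 < p ∧ ∃ n : ℕ, (S p n ∩ SigmaSet).Nonempty

lemma sq_step {x k m a b k' : ℕ} (h : x ^ k ≡ a [MOD m]) (hk : k' = 2 * k)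
    (hb : a * a % m = b) : x ^ k' ≡ b [MOD m] := by
  subst hk
  calc x ^ (2 * k) = x ^ k * x ^ k := by rw [two_mul, pow_add]
    _ ≡ a * a [MOD m] := h.mul h
    _ ≡ b [MOD m] := hb ▸ (Nat.mod_modEq _ _).symm

lemma mul_step {x k m a b k' : ℕ} (h : x ^ k ≡ a [MOD m]) (hk : k' = k + 1)
    (hb : a * x % m = b) : x ^ k' ≡ b [MOD m] := by
  subst hk
  calc x ^ (k + 1) = x ^ k * x := by rw [pow_succ]
    _ ≡ a * x [MOD m] := h.mul_right x
    _ ≡ b [MOD m] := hb ▸ (Nat.mod_modEq _ _).symm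

lemma zmod_pow_eq {x e r m : ℕ} (h : x ^ e ≡ r [MOD m]) :
    ((x : ZMod m)) ^ e = ((r : ℕ) : ZMod m) := by
  rw [← Nat.cast_pow]; exact (ZMod.natCast_eq_natCast_iff _ _ _).mpr h

lemma big_prime : Nat.Prime 3737657091169 := by
  have f0 : (37:ℕ) ^ 1 ≡ 37 [MOD 3737657091169] := by rw [pow_one]
  have f1 : (37:ℕ) ^ 2 ≡ 1369 [MOD 3737657091169] := sq_step f0 (by norm_num) (by norm_num)
  have f2 : (37:ℕ) ^ 3 ≡ 50653 [MOD 3737657091169] := mul_step f1 (by norm_num) (by norm_num)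
  have f3 : (37:ℕ) ^ 6 ≡ 2565726409 [MOD 3737657091169] := sq_step f2 (by norm_num) (by norm_num)
  have f4 : (37:ℕ) ^ 12 ≡ 3454018634031 [MOD 3737657091169] := sq_step f3 (by norm_num) (by norm_num)
  have f5 : (37:ℕ) ^ 13 ≡ 718348359401 [MOD 3737657091169] := mul_step f4 (by norm_num) (by norm_num)
  have f6 : (37:ℕ) ^ 26 ≡ 812894741125 [MOD 3737657091169] := sq_step f5 (by norm_num) (by norm_num)
  have f7 : (37:ℕ) ^ 27 ≡ 175848692273 [MOD 3737657091169] := mul_step f6 (by norm_num) (by norm_num)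
  have f8 : (37:ℕ) ^ 54 ≡ 1743419735432 [MOD 3737657091169] := sq_step f7 (by norm_num) (by norm_num)
  have f9 : (37:ℕ) ^ 108 ≡ 150316877408 [MOD 3737657091169] := sq_step f8 (by norm_num) (by norm_num)
  have f10 : (37:ℕ) ^ 216 ≡ 3693920053135 [MOD 3737657091169] := sq_step f9 (by norm_num) (by norm_num)
  have f11 : (37:ℕ) ^ 217 ≡ 2119386683911 [MOD 3737657091169] := mul_step f10 (by norm_num) (by norm_num)
  have f12 : (37:ℕ) ^ 434 ≡ 1774085368257 [MOD 3737657091169] := sq_step f11 (by norm_num) (by norm_num)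
  have f13 : (37:ℕ) ^ 435 ≡ 2100988075636 [MOD 3737657091169] := mul_step f12 (by norm_num) (by norm_num)
  have f14 : (37:ℕ) ^ 870 ≡ 2824496456355 [MOD 3737657091169] := sq_step f13 (by norm_num) (by norm_num)
  have f15 : (37:ℕ) ^ 1740 ≡ 340284777665 [MOD 3737657091169] := sq_step f14 (by norm_num) (by norm_num)
  have f16 : (37:ℕ) ^ 3480 ≡ 2314829077265 [MOD 3737657091169] := sq_step f15 (by norm_num) (by norm_num)
  have f17 : (37:ℕ) ^ 6960 ≡ 3305806564024 [MOD 3737657091169] := sq_step f16 (by norm_num) (by norm_num)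
  have f18 : (37:ℕ) ^ 6961 ≡ 2709815951480 [MOD 3737657091169] := mul_step f17 (by norm_num) (by norm_num)
  have f19 : (37:ℕ) ^ 13922 ≡ 58556427867 [MOD 3737657091169] := sq_step f18 (by norm_num) (by norm_num)
  have f20 : (37:ℕ) ^ 13923 ≡ 2166587831079 [MOD 3737657091169] := mul_step f19 (by norm_num) (by norm_num)
  have f21 : (37:ℕ) ^ 27846 ≡ 3703467961323 [MOD 3737657091169] := sq_step f20 (by norm_num) (by norm_num)
  have f22 : (37:ℕ) ^ 27847 ≡ 2472659286867 [MOD 3737657091169] := mul_step f21 (by norm_num) (by norm_num)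
  have f23 : (37:ℕ) ^ 55694 ≡ 3324732506639 [MOD 3737657091169] := sq_step f22 (by norm_num) (by norm_num)
  have f24 : (37:ℕ) ^ 55695 ≡ 3410075828235 [MOD 3737657091169] := mul_step f23 (by norm_num) (by norm_num)
  have f25 : (37:ℕ) ^ 111390 ≡ 673446863537 [MOD 3737657091169] := sq_step f24 (by norm_num) (by norm_num)
  have f26 : (37:ℕ) ^ 222780 ≡ 1569367864534 [MOD 3737657091169] := sq_step f25 (by norm_num) (by norm_num)
  have f27 : (37:ℕ) ^ 222781 ≡ 2001754620223 [MOD 3737657091169] := mul_step f26 (by norm_num) (by norm_num)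
  have f28 : (37:ℕ) ^ 445562 ≡ 845314668274 [MOD 3737657091169] := sq_step f27 (by norm_num) (by norm_num)
  have f29 : (37:ℕ) ^ 445563 ≡ 1375385996786 [MOD 3737657091169] := mul_step f28 (by norm_num) (by norm_num)
  have f30 : (37:ℕ) ^ 891126 ≡ 2938699355065 [MOD 3737657091169] := sq_step f29 (by norm_num) (by norm_num)
  have f31 : (37:ℕ) ^ 1782252 ≡ 1180145282549 [MOD 3737657091169] := sq_step f30 (by norm_num) (by norm_num)
  have f32 : (37:ℕ) ^ 1782253 ≡ 2551147451454 [MOD 3737657091169] := mul_step f31 (by norm_num) (by norm_num)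
  have f33 : (37:ℕ) ^ 3564506 ≡ 2158336038456 [MOD 3737657091169] := sq_step f32 (by norm_num) (by norm_num)
  have f34 : (37:ℕ) ^ 3564507 ≡ 1367634508323 [MOD 3737657091169] := mul_step f33 (by norm_num) (by norm_num)
  have f35 : (37:ℕ) ^ 7129014 ≡ 1626782383895 [MOD 3737657091169] := sq_step f34 (by norm_num) (by norm_num)
  have f36 : (37:ℕ) ^ 7129015 ≡ 388434745411 [MOD 3737657091169] := mul_step f35 (by norm_num) (by norm_num)
  have f37 : (37:ℕ) ^ 14258030 ≡ 1209394408543 [MOD 3737657091169] := sq_step f36 (by norm_num) (by norm_num)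
  have f38 : (37:ℕ) ^ 28516060 ≡ 671588056700 [MOD 3737657091169] := sq_step f37 (by norm_num) (by norm_num)
  have f39 : (37:ℕ) ^ 57032120 ≡ 2796941574601 [MOD 3737657091169] := sq_step f38 (by norm_num) (by norm_num)
  have f40 : (37:ℕ) ^ 57032121 ≡ 2570096798674 [MOD 3737657091169] := mul_step f39 (by norm_num) (by norm_num)
  have f41 : (37:ℕ) ^ 114064242 ≡ 349223690666 [MOD 3737657091169] := sq_step f40 (by norm_num) (by norm_num)
  have f42 : (37:ℕ) ^ 228128484 ≡ 2882917326680 [MOD 3737657091169] := sq_step f41 (by norm_num) (by norm_num)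
  have f43 : (37:ℕ) ^ 456256968 ≡ 2384031052297 [MOD 3737657091169] := sq_step f42 (by norm_num) (by norm_num)
  have f44 : (37:ℕ) ^ 456256969 ≡ 2243035838102 [MOD 3737657091169] := mul_step f43 (by norm_num) (by norm_num)
  have f45 : (37:ℕ) ^ 912513938 ≡ 684670053236 [MOD 3737657091169] := sq_step f44 (by norm_num) (by norm_num)
  have f46 : (37:ℕ) ^ 1825027876 ≡ 3161396314843 [MOD 3737657091169] := sq_step f45 (by norm_num) (by norm_num)
  have f47 : (37:ℕ) ^ 3650055752 ≡ 83416852454 [MOD 3737657091169] := sq_step f46 (by norm_num) (by norm_num)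
  have f48 : (37:ℕ) ^ 3650055753 ≡ 3086423540798 [MOD 3737657091169] := mul_step f47 (by norm_num) (by norm_num)
  have f49 : (37:ℕ) ^ 7300111506 ≡ 2692461273179 [MOD 3737657091169] := sq_step f48 (by norm_num) (by norm_num)
  have f50 : (37:ℕ) ^ 14600223012 ≡ 3147813511148 [MOD 3737657091169] := sq_step f49 (by norm_num) (by norm_num)
  have f51 : (37:ℕ) ^ 29200446024 ≡ 2681893737189 [MOD 3737657091169] := sq_step f50 (by norm_num) (by norm_num)
  have f52 : (37:ℕ) ^ 58400892048 ≡ 3498122524061 [MOD 3737657091169] := sq_step f51 (by norm_num) (by norm_num)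
  have f53 : (37:ℕ) ^ 58400892049 ≡ 2350192290511 [MOD 3737657091169] := mul_step f52 (by norm_num) (by norm_num)
  have f54 : (37:ℕ) ^ 116801784098 ≡ 1904946478106 [MOD 3737657091169] := sq_step f53 (by norm_num) (by norm_num)
  have f55 : (37:ℕ) ^ 116801784099 ≡ 3205192048880 [MOD 3737657091169] := mul_step f54 (by norm_num) (by norm_num)
  have f56 : (37:ℕ) ^ 233603568198 ≡ 2590652116533 [MOD 3737657091169] := sq_step f55 (by norm_num) (by norm_num)
  have f57 : (37:ℕ) ^ 467207136396 ≡ 816759658099 [MOD 3737657091169] := sq_step f56 (by norm_num) (by norm_num)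
  have f58 : (37:ℕ) ^ 934414272792 ≡ 623681959380 [MOD 3737657091169] := sq_step f57 (by norm_num) (by norm_num)
  have f59 : (37:ℕ) ^ 1868828545584 ≡ 3737657091168 [MOD 3737657091169] := sq_step f58 (by norm_num) (by norm_num)
  have f60 : (37:ℕ) ^ 3737657091168 ≡ 1 [MOD 3737657091169] := sq_step f59 (by norm_num) (by norm_num)
  have hful : ((37 : ℕ) : ZMod 3737657091169) ^ (3737657091169-1) = 1 := (zmod_pow_eq f60).trans Nat.cast_one
  have g0_0 : (37:ℕ) ^ 1 ≡ 37 [MOD 3737657091169] := by rw [pow_one]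
  have g0_1 : (37:ℕ) ^ 2 ≡ 1369 [MOD 3737657091169] := sq_step g0_0 (by norm_num) (by norm_num)
  have g0_2 : (37:ℕ) ^ 3 ≡ 50653 [MOD 3737657091169] := mul_step g0_1 (by norm_num) (by norm_num)
  have g0_3 : (37:ℕ) ^ 6 ≡ 2565726409 [MOD 3737657091169] := sq_step g0_2 (by norm_num) (by norm_num)
  have g0_4 : (37:ℕ) ^ 12 ≡ 3454018634031 [MOD 3737657091169] := sq_step g0_3 (by norm_num) (by norm_num)
  have g0_5 : (37:ℕ) ^ 13 ≡ 718348359401 [MOD 3737657091169] := mul_step g0_4 (by norm_num) (by norm_num)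
  have g0_6 : (37:ℕ) ^ 26 ≡ 812894741125 [MOD 3737657091169] := sq_step g0_5 (by norm_num) (by norm_num)
  have g0_7 : (37:ℕ) ^ 27 ≡ 175848692273 [MOD 3737657091169] := mul_step g0_6 (by norm_num) (by norm_num)
  have g0_8 : (37:ℕ) ^ 54 ≡ 1743419735432 [MOD 3737657091169] := sq_step g0_7 (by norm_num) (by norm_num)
  have g0_9 : (37:ℕ) ^ 108 ≡ 150316877408 [MOD 3737657091169] := sq_step g0_8 (by norm_num) (by norm_num)
  have g0_10 : (37:ℕ) ^ 216 ≡ 3693920053135 [MOD 3737657091169] := sq_step g0_9 (by norm_num) (by norm_num)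
  have g0_11 : (37:ℕ) ^ 217 ≡ 2119386683911 [MOD 3737657091169] := mul_step g0_10 (by norm_num) (by norm_num)
  have g0_12 : (37:ℕ) ^ 434 ≡ 1774085368257 [MOD 3737657091169] := sq_step g0_11 (by norm_num) (by norm_num)
  have g0_13 : (37:ℕ) ^ 435 ≡ 2100988075636 [MOD 3737657091169] := mul_step g0_12 (by norm_num) (by norm_num)
  have g0_14 : (37:ℕ) ^ 870 ≡ 2824496456355 [MOD 3737657091169] := sq_step g0_13 (by norm_num) (by norm_num)
  have g0_15 : (37:ℕ) ^ 1740 ≡ 340284777665 [MOD 3737657091169] := sq_step g0_14 (by norm_num) (by norm_num)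
  have g0_16 : (37:ℕ) ^ 3480 ≡ 2314829077265 [MOD 3737657091169] := sq_step g0_15 (by norm_num) (by norm_num)
  have g0_17 : (37:ℕ) ^ 6960 ≡ 3305806564024 [MOD 3737657091169] := sq_step g0_16 (by norm_num) (by norm_num)
  have g0_18 : (37:ℕ) ^ 6961 ≡ 2709815951480 [MOD 3737657091169] := mul_step g0_17 (by norm_num) (by norm_num)
  have g0_19 : (37:ℕ) ^ 13922 ≡ 58556427867 [MOD 3737657091169] := sq_step g0_18 (by norm_num) (by norm_num)
  have g0_20 : (37:ℕ) ^ 13923 ≡ 2166587831079 [MOD 3737657091169] := mul_step g0_19 (by norm_num) (by norm_num)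
  have g0_21 : (37:ℕ) ^ 27846 ≡ 3703467961323 [MOD 3737657091169] := sq_step g0_20 (by norm_num) (by norm_num)
  have g0_22 : (37:ℕ) ^ 27847 ≡ 2472659286867 [MOD 3737657091169] := mul_step g0_21 (by norm_num) (by norm_num)
  have g0_23 : (37:ℕ) ^ 55694 ≡ 3324732506639 [MOD 3737657091169] := sq_step g0_22 (by norm_num) (by norm_num)
  have g0_24 : (37:ℕ) ^ 55695 ≡ 3410075828235 [MOD 3737657091169] := mul_step g0_23 (by norm_num) (by norm_num)
  have g0_25 : (37:ℕ) ^ 111390 ≡ 673446863537 [MOD 3737657091169] := sq_step g0_24 (by norm_num) (by norm_num)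
  have g0_26 : (37:ℕ) ^ 222780 ≡ 1569367864534 [MOD 3737657091169] := sq_step g0_25 (by norm_num) (by norm_num)
  have g0_27 : (37:ℕ) ^ 222781 ≡ 2001754620223 [MOD 3737657091169] := mul_step g0_26 (by norm_num) (by norm_num)
  have g0_28 : (37:ℕ) ^ 445562 ≡ 845314668274 [MOD 3737657091169] := sq_step g0_27 (by norm_num) (by norm_num)
  have g0_29 : (37:ℕ) ^ 445563 ≡ 1375385996786 [MOD 3737657091169] := mul_step g0_28 (by norm_num) (by norm_num)
  have g0_30 : (37:ℕ) ^ 891126 ≡ 2938699355065 [MOD 3737657091169] := sq_step g0_29 (by norm_num) (by norm_num)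
  have g0_31 : (37:ℕ) ^ 1782252 ≡ 1180145282549 [MOD 3737657091169] := sq_step g0_30 (by norm_num) (by norm_num)
  have g0_32 : (37:ℕ) ^ 1782253 ≡ 2551147451454 [MOD 3737657091169] := mul_step g0_31 (by norm_num) (by norm_num)
  have g0_33 : (37:ℕ) ^ 3564506 ≡ 2158336038456 [MOD 3737657091169] := sq_step g0_32 (by norm_num) (by norm_num)
  have g0_34 : (37:ℕ) ^ 3564507 ≡ 1367634508323 [MOD 3737657091169] := mul_step g0_33 (by norm_num) (by norm_num)
  have g0_35 : (37:ℕ) ^ 7129014 ≡ 1626782383895 [MOD 3737657091169] := sq_step g0_34 (by norm_num) (by norm_num)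
  have g0_36 : (37:ℕ) ^ 7129015 ≡ 388434745411 [MOD 3737657091169] := mul_step g0_35 (by norm_num) (by norm_num)
  have g0_37 : (37:ℕ) ^ 14258030 ≡ 1209394408543 [MOD 3737657091169] := sq_step g0_36 (by norm_num) (by norm_num)
  have g0_38 : (37:ℕ) ^ 28516060 ≡ 671588056700 [MOD 3737657091169] := sq_step g0_37 (by norm_num) (by norm_num)
  have g0_39 : (37:ℕ) ^ 57032120 ≡ 2796941574601 [MOD 3737657091169] := sq_step g0_38 (by norm_num) (by norm_num)
  have g0_40 : (37:ℕ) ^ 57032121 ≡ 2570096798674 [MOD 3737657091169] := mul_step g0_39 (by norm_num) (by norm_num)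
  have g0_41 : (37:ℕ) ^ 114064242 ≡ 349223690666 [MOD 3737657091169] := sq_step g0_40 (by norm_num) (by norm_num)
  have g0_42 : (37:ℕ) ^ 228128484 ≡ 2882917326680 [MOD 3737657091169] := sq_step g0_41 (by norm_num) (by norm_num)
  have g0_43 : (37:ℕ) ^ 456256968 ≡ 2384031052297 [MOD 3737657091169] := sq_step g0_42 (by norm_num) (by norm_num)
  have g0_44 : (37:ℕ) ^ 456256969 ≡ 2243035838102 [MOD 3737657091169] := mul_step g0_43 (by norm_num) (by norm_num)
  have g0_45 : (37:ℕ) ^ 912513938 ≡ 684670053236 [MOD 3737657091169] := sq_step g0_44 (by norm_num) (by norm_num)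
  have g0_46 : (37:ℕ) ^ 1825027876 ≡ 3161396314843 [MOD 3737657091169] := sq_step g0_45 (by norm_num) (by norm_num)
  have g0_47 : (37:ℕ) ^ 3650055752 ≡ 83416852454 [MOD 3737657091169] := sq_step g0_46 (by norm_num) (by norm_num)
  have g0_48 : (37:ℕ) ^ 3650055753 ≡ 3086423540798 [MOD 3737657091169] := mul_step g0_47 (by norm_num) (by norm_num)
  have g0_49 : (37:ℕ) ^ 7300111506 ≡ 2692461273179 [MOD 3737657091169] := sq_step g0_48 (by norm_num) (by norm_num)
  have g0_50 : (37:ℕ) ^ 14600223012 ≡ 3147813511148 [MOD 3737657091169] := sq_step g0_49 (by norm_num) (by norm_num)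
  have g0_51 : (37:ℕ) ^ 29200446024 ≡ 2681893737189 [MOD 3737657091169] := sq_step g0_50 (by norm_num) (by norm_num)
  have g0_52 : (37:ℕ) ^ 58400892048 ≡ 3498122524061 [MOD 3737657091169] := sq_step g0_51 (by norm_num) (by norm_num)
  have g0_53 : (37:ℕ) ^ 58400892049 ≡ 2350192290511 [MOD 3737657091169] := mul_step g0_52 (by norm_num) (by norm_num)
  have g0_54 : (37:ℕ) ^ 116801784098 ≡ 1904946478106 [MOD 3737657091169] := sq_step g0_53 (by norm_num) (by norm_num)
  have g0_55 : (37:ℕ) ^ 116801784099 ≡ 3205192048880 [MOD 3737657091169] := mul_step g0_54 (by norm_num) (by norm_num)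
  have g0_56 : (37:ℕ) ^ 233603568198 ≡ 2590652116533 [MOD 3737657091169] := sq_step g0_55 (by norm_num) (by norm_num)
  have g0_57 : (37:ℕ) ^ 467207136396 ≡ 816759658099 [MOD 3737657091169] := sq_step g0_56 (by norm_num) (by norm_num)
  have g0_58 : (37:ℕ) ^ 934414272792 ≡ 623681959380 [MOD 3737657091169] := sq_step g0_57 (by norm_num) (by norm_num)
  have g0_59 : (37:ℕ) ^ 1868828545584 ≡ 3737657091168 [MOD 3737657091169] := sq_step g0_58 (by norm_num) (by norm_num)
  have hq0 : ((37 : ℕ) : ZMod 3737657091169) ^ ((3737657091169-1)/2) ≠ 1 := by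
    intro hcon
    have h2 : ((3737657091168:ℕ) : ZMod 3737657091169) = ((1:ℕ) : ZMod 3737657091169) := by
      rw [← zmod_pow_eq g0_59, hcon, Nat.cast_one]
    have h3 := Nat.ModEq.eq_of_lt_of_lt ((ZMod.natCast_eq_natCast_iff _ _ _).mp h2)
      (by norm_num) (by norm_num)
    norm_num at h3
  have g1_0 : (37:ℕ) ^ 1 ≡ 37 [MOD 3737657091169] := by rw [pow_one]
  have g1_1 : (37:ℕ) ^ 2 ≡ 1369 [MOD 3737657091169] := sq_step g1_0 (by norm_num) (by norm_num)
  have g1_2 : (37:ℕ) ^ 4 ≡ 1874161 [MOD 3737657091169] := sq_step g1_1 (by norm_num) (by norm_num)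
  have g1_3 : (37:ℕ) ^ 8 ≡ 3512479453921 [MOD 3737657091169] := sq_step g1_2 (by norm_num) (by norm_num)
  have g1_4 : (37:ℕ) ^ 9 ≡ 2881398695331 [MOD 3737657091169] := mul_step g1_3 (by norm_num) (by norm_num)
  have g1_5 : (37:ℕ) ^ 18 ≡ 1184133041241 [MOD 3737657091169] := sq_step g1_4 (by norm_num) (by norm_num)
  have g1_6 : (37:ℕ) ^ 36 ≡ 2727016898960 [MOD 3737657091169] := sq_step g1_5 (by norm_num) (by norm_num)
  have g1_7 : (37:ℕ) ^ 72 ≡ 1691541395937 [MOD 3737657091169] := sq_step g1_6 (by norm_num) (by norm_num)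
  have g1_8 : (37:ℕ) ^ 144 ≡ 2427526576849 [MOD 3737657091169] := sq_step g1_7 (by norm_num) (by norm_num)
  have g1_9 : (37:ℕ) ^ 145 ≡ 114713155357 [MOD 3737657091169] := mul_step g1_8 (by norm_num) (by norm_num)
  have g1_10 : (37:ℕ) ^ 290 ≡ 3607443033725 [MOD 3737657091169] := sq_step g1_9 (by norm_num) (by norm_num)
  have g1_11 : (37:ℕ) ^ 580 ≡ 2908379510906 [MOD 3737657091169] := sq_step g1_10 (by norm_num) (by norm_num)
  have g1_12 : (37:ℕ) ^ 1160 ≡ 367245281828 [MOD 3737657091169] := sq_step g1_11 (by norm_num) (by norm_num)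
  have g1_13 : (37:ℕ) ^ 2320 ≡ 2676368373450 [MOD 3737657091169] := sq_step g1_12 (by norm_num) (by norm_num)
  have g1_14 : (37:ℕ) ^ 4640 ≡ 970782392252 [MOD 3737657091169] := sq_step g1_13 (by norm_num) (by norm_num)
  have g1_15 : (37:ℕ) ^ 4641 ≡ 2280034692803 [MOD 3737657091169] := mul_step g1_14 (by norm_num) (by norm_num)
  have g1_16 : (37:ℕ) ^ 9282 ≡ 19695745706 [MOD 3737657091169] := sq_step g1_15 (by norm_num) (by norm_num)
  have g1_17 : (37:ℕ) ^ 18564 ≡ 3340176283909 [MOD 3737657091169] := sq_step g1_16 (by norm_num) (by norm_num)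
  have g1_18 : (37:ℕ) ^ 18565 ≡ 243838496056 [MOD 3737657091169] := mul_step g1_17 (by norm_num) (by norm_num)
  have g1_19 : (37:ℕ) ^ 37130 ≡ 1362748197961 [MOD 3737657091169] := sq_step g1_18 (by norm_num) (by norm_num)
  have g1_20 : (37:ℕ) ^ 74260 ≡ 1209922596589 [MOD 3737657091169] := sq_step g1_19 (by norm_num) (by norm_num)
  have g1_21 : (37:ℕ) ^ 148520 ≡ 574421166384 [MOD 3737657091169] := sq_step g1_20 (by norm_num) (by norm_num)
  have g1_22 : (37:ℕ) ^ 148521 ≡ 2565297700363 [MOD 3737657091169] := mul_step g1_21 (by norm_num) (by norm_num)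
  have g1_23 : (37:ℕ) ^ 297042 ≡ 2538404546903 [MOD 3737657091169] := sq_step g1_22 (by norm_num) (by norm_num)
  have g1_24 : (37:ℕ) ^ 594084 ≡ 2781888657781 [MOD 3737657091169] := sq_step g1_23 (by norm_num) (by norm_num)
  have g1_25 : (37:ℕ) ^ 1188168 ≡ 2977914918137 [MOD 3737657091169] := sq_step g1_24 (by norm_num) (by norm_num)
  have g1_26 : (37:ℕ) ^ 1188169 ≡ 1790796327168 [MOD 3737657091169] := mul_step g1_25 (by norm_num) (by norm_num)
  have g1_27 : (37:ℕ) ^ 2376338 ≡ 674667085140 [MOD 3737657091169] := sq_step g1_26 (by norm_num) (by norm_num)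
  have g1_28 : (37:ℕ) ^ 4752676 ≡ 2945787090507 [MOD 3737657091169] := sq_step g1_27 (by norm_num) (by norm_num)
  have g1_29 : (37:ℕ) ^ 9505352 ≡ 1669832161152 [MOD 3737657091169] := sq_step g1_28 (by norm_num) (by norm_num)
  have g1_30 : (37:ℕ) ^ 9505353 ≡ 1981276503920 [MOD 3737657091169] := mul_step g1_29 (by norm_num) (by norm_num)
  have g1_31 : (37:ℕ) ^ 19010706 ≡ 324742859433 [MOD 3737657091169] := sq_step g1_30 (by norm_num) (by norm_num)
  have g1_32 : (37:ℕ) ^ 19010707 ≡ 802514525514 [MOD 3737657091169] := mul_step g1_31 (by norm_num) (by norm_num)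
  have g1_33 : (37:ℕ) ^ 38021414 ≡ 1883113212506 [MOD 3737657091169] := sq_step g1_32 (by norm_num) (by norm_num)
  have g1_34 : (37:ℕ) ^ 76042828 ≡ 470189036250 [MOD 3737657091169] := sq_step g1_33 (by norm_num) (by norm_num)
  have g1_35 : (37:ℕ) ^ 152085656 ≡ 1179502723570 [MOD 3737657091169] := sq_step g1_34 (by norm_num) (by norm_num)
  have g1_36 : (37:ℕ) ^ 304171312 ≡ 2789193913704 [MOD 3737657091169] := sq_step g1_35 (by norm_num) (by norm_num)
  have g1_37 : (37:ℕ) ^ 608342624 ≡ 2090871114687 [MOD 3737657091169] := sq_step g1_36 (by norm_num) (by norm_num)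
  have g1_38 : (37:ℕ) ^ 608342625 ≡ 2609089420039 [MOD 3737657091169] := mul_step g1_37 (by norm_num) (by norm_num)
  have g1_39 : (37:ℕ) ^ 1216685250 ≡ 170823195678 [MOD 3737657091169] := sq_step g1_38 (by norm_num) (by norm_num)
  have g1_40 : (37:ℕ) ^ 1216685251 ≡ 2582801148917 [MOD 3737657091169] := mul_step g1_39 (by norm_num) (by norm_num)
  have g1_41 : (37:ℕ) ^ 2433370502 ≡ 1377072380790 [MOD 3737657091169] := sq_step g1_40 (by norm_num) (by norm_num)
  have g1_42 : (37:ℕ) ^ 4866741004 ≡ 22626433900 [MOD 3737657091169] := sq_step g1_41 (by norm_num) (by norm_num)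
  have g1_43 : (37:ℕ) ^ 9733482008 ≡ 216399044286 [MOD 3737657091169] := sq_step g1_42 (by norm_num) (by norm_num)
  have g1_44 : (37:ℕ) ^ 19466964016 ≡ 1808510417139 [MOD 3737657091169] := sq_step g1_43 (by norm_num) (by norm_num)
  have g1_45 : (37:ℕ) ^ 38933928032 ≡ 1757744326622 [MOD 3737657091169] := sq_step g1_44 (by norm_num) (by norm_num)
  have g1_46 : (37:ℕ) ^ 38933928033 ≡ 1496369535141 [MOD 3737657091169] := mul_step g1_45 (by norm_num) (by norm_num)
  have g1_47 : (37:ℕ) ^ 77867856066 ≡ 1587697248393 [MOD 3737657091169] := sq_step g1_46 (by norm_num) (by norm_num)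
  have g1_48 : (37:ℕ) ^ 155735712132 ≡ 673285438777 [MOD 3737657091169] := sq_step g1_47 (by norm_num) (by norm_num)
  have g1_49 : (37:ℕ) ^ 311471424264 ≡ 2474109697011 [MOD 3737657091169] := sq_step g1_48 (by norm_num) (by norm_num)
  have g1_50 : (37:ℕ) ^ 622942848528 ≡ 3348578 [MOD 3737657091169] := sq_step g1_49 (by norm_num) (by norm_num)
  have g1_51 : (37:ℕ) ^ 1245885697056 ≡ 3348577 [MOD 3737657091169] := sq_step g1_50 (by norm_num) (by norm_num)
  have hq1 : ((37 : ℕ) : ZMod 3737657091169) ^ ((3737657091169-1)/3) ≠ 1 := by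
    intro hcon
    have h2 : ((3348577:ℕ) : ZMod 3737657091169) = ((1:ℕ) : ZMod 3737657091169) := by
      rw [← zmod_pow_eq g1_51, hcon, Nat.cast_one]
    have h3 := Nat.ModEq.eq_of_lt_of_lt ((ZMod.natCast_eq_natCast_iff _ _ _).mp h2)
      (by norm_num) (by norm_num)
    norm_num at h3
  have g2_0 : (37:ℕ) ^ 1 ≡ 37 [MOD 3737657091169] := by rw [pow_one]
  have g2_1 : (37:ℕ) ^ 2 ≡ 1369 [MOD 3737657091169] := sq_step g2_0 (by norm_num) (by norm_num)
  have g2_2 : (37:ℕ) ^ 3 ≡ 50653 [MOD 3737657091169] := mul_step g2_1 (by norm_num) (by norm_num)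
  have g2_3 : (37:ℕ) ^ 6 ≡ 2565726409 [MOD 3737657091169] := sq_step g2_2 (by norm_num) (by norm_num)
  have g2_4 : (37:ℕ) ^ 7 ≡ 94931877133 [MOD 3737657091169] := mul_step g2_3 (by norm_num) (by norm_num)
  have g2_5 : (37:ℕ) ^ 14 ≡ 415289659654 [MOD 3737657091169] := sq_step g2_4 (by norm_num) (by norm_num)
  have g2_6 : (37:ℕ) ^ 15 ≡ 415089042522 [MOD 3737657091169] := mul_step g2_5 (by norm_num) (by norm_num)
  have g2_7 : (37:ℕ) ^ 30 ≡ 426961448542 [MOD 3737657091169] := sq_step g2_6 (by norm_num) (by norm_num)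
  have g2_8 : (37:ℕ) ^ 31 ≡ 846945231378 [MOD 3737657091169] := mul_step g2_7 (by norm_num) (by norm_num)
  have g2_9 : (37:ℕ) ^ 62 ≡ 3124405926252 [MOD 3737657091169] := sq_step g2_8 (by norm_num) (by norm_num)
  have g2_10 : (37:ℕ) ^ 124 ≡ 563218108780 [MOD 3737657091169] := sq_step g2_9 (by norm_num) (by norm_num)
  have g2_11 : (37:ℕ) ^ 248 ≡ 875610744380 [MOD 3737657091169] := sq_step g2_10 (by norm_num) (by norm_num)
  have g2_12 : (37:ℕ) ^ 496 ≡ 945042310790 [MOD 3737657091169] := sq_step g2_11 (by norm_num) (by norm_num)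
  have g2_13 : (37:ℕ) ^ 497 ≡ 1327651678709 [MOD 3737657091169] := mul_step g2_12 (by norm_num) (by norm_num)
  have g2_14 : (37:ℕ) ^ 994 ≡ 1879399367782 [MOD 3737657091169] := sq_step g2_13 (by norm_num) (by norm_num)
  have g2_15 : (37:ℕ) ^ 1988 ≡ 2582773761247 [MOD 3737657091169] := sq_step g2_14 (by norm_num) (by norm_num)
  have g2_16 : (37:ℕ) ^ 1989 ≡ 2121201886914 [MOD 3737657091169] := mul_step g2_15 (by norm_num) (by norm_num)
  have g2_17 : (37:ℕ) ^ 3978 ≡ 643832998732 [MOD 3737657091169] := sq_step g2_16 (by norm_num) (by norm_num)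
  have g2_18 : (37:ℕ) ^ 7956 ≡ 155742580383 [MOD 3737657091169] := sq_step g2_17 (by norm_num) (by norm_num)
  have g2_19 : (37:ℕ) ^ 15912 ≡ 1380082871821 [MOD 3737657091169] := sq_step g2_18 (by norm_num) (by norm_num)
  have g2_20 : (37:ℕ) ^ 31824 ≡ 1861617632434 [MOD 3737657091169] := sq_step g2_19 (by norm_num) (by norm_num)
  have g2_21 : (37:ℕ) ^ 31825 ≡ 1602024759016 [MOD 3737657091169] := mul_step g2_20 (by norm_num) (by norm_num)
  have g2_22 : (37:ℕ) ^ 63650 ≡ 675719497055 [MOD 3737657091169] := sq_step g2_21 (by norm_num) (by norm_num)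
  have g2_23 : (37:ℕ) ^ 63651 ≡ 2575678844021 [MOD 3737657091169] := mul_step g2_22 (by norm_num) (by norm_num)
  have g2_24 : (37:ℕ) ^ 127302 ≡ 1291880476642 [MOD 3737657091169] := sq_step g2_23 (by norm_num) (by norm_num)
  have g2_25 : (37:ℕ) ^ 127303 ≡ 2947692541726 [MOD 3737657091169] := mul_step g2_24 (by norm_num) (by norm_num)
  have g2_26 : (37:ℕ) ^ 254606 ≡ 98397600628 [MOD 3737657091169] := sq_step g2_25 (by norm_num) (by norm_num)
  have g2_27 : (37:ℕ) ^ 254607 ≡ 3640711223236 [MOD 3737657091169] := mul_step g2_26 (by norm_num) (by norm_num)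
  have g2_28 : (37:ℕ) ^ 509214 ≡ 2831332252679 [MOD 3737657091169] := sq_step g2_27 (by norm_num) (by norm_num)
  have g2_29 : (37:ℕ) ^ 509215 ≡ 104894796391 [MOD 3737657091169] := mul_step g2_28 (by norm_num) (by norm_num)
  have g2_30 : (37:ℕ) ^ 1018430 ≡ 1034662372781 [MOD 3737657091169] := sq_step g2_29 (by norm_num) (by norm_num)
  have g2_31 : (37:ℕ) ^ 2036860 ≡ 2940911898358 [MOD 3737657091169] := sq_step g2_30 (by norm_num) (by norm_num)
  have g2_32 : (37:ℕ) ^ 2036861 ≡ 421684595345 [MOD 3737657091169] := mul_step g2_31 (by norm_num) (by norm_num)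
  have g2_33 : (37:ℕ) ^ 4073722 ≡ 347366723553 [MOD 3737657091169] := sq_step g2_32 (by norm_num) (by norm_num)
  have g2_34 : (37:ℕ) ^ 8147444 ≡ 766088912122 [MOD 3737657091169] := sq_step g2_33 (by norm_num) (by norm_num)
  have g2_35 : (37:ℕ) ^ 8147445 ≡ 2181690110331 [MOD 3737657091169] := mul_step g2_34 (by norm_num) (by norm_num)
  have g2_36 : (37:ℕ) ^ 16294890 ≡ 2836679248824 [MOD 3737657091169] := sq_step g2_35 (by norm_num) (by norm_num)
  have g2_37 : (37:ℕ) ^ 16294891 ≡ 302733653756 [MOD 3737657091169] := mul_step g2_36 (by norm_num) (by norm_num)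
  have g2_38 : (37:ℕ) ^ 32589782 ≡ 2903630398322 [MOD 3737657091169] := sq_step g2_37 (by norm_num) (by norm_num)
  have g2_39 : (37:ℕ) ^ 32589783 ≡ 2779926185182 [MOD 3737657091169] := mul_step g2_38 (by norm_num) (by norm_num)
  have g2_40 : (37:ℕ) ^ 65179566 ≡ 2739874635690 [MOD 3737657091169] := sq_step g2_39 (by norm_num) (by norm_num)
  have g2_41 : (37:ℕ) ^ 65179567 ≡ 458620058967 [MOD 3737657091169] := mul_step g2_40 (by norm_num) (by norm_num)
  have g2_42 : (37:ℕ) ^ 130359134 ≡ 2671467270935 [MOD 3737657091169] := sq_step g2_41 (by norm_num) (by norm_num)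
  have g2_43 : (37:ℕ) ^ 260718268 ≡ 1621321158483 [MOD 3737657091169] := sq_step g2_42 (by norm_num) (by norm_num)
  have g2_44 : (37:ℕ) ^ 521436536 ≡ 3096991586293 [MOD 3737657091169] := sq_step g2_43 (by norm_num) (by norm_num)
  have g2_45 : (37:ℕ) ^ 1042873072 ≡ 3162423251317 [MOD 3737657091169] := sq_step g2_44 (by norm_num) (by norm_num)
  have g2_46 : (37:ℕ) ^ 2085746144 ≡ 215473103507 [MOD 3737657091169] := sq_step g2_45 (by norm_num) (by norm_num)
  have g2_47 : (37:ℕ) ^ 4171492288 ≡ 2660482087125 [MOD 3737657091169] := sq_step g2_46 (by norm_num) (by norm_num)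
  have g2_48 : (37:ℕ) ^ 4171492289 ≡ 1258752853231 [MOD 3737657091169] := mul_step g2_47 (by norm_num) (by norm_num)
  have g2_49 : (37:ℕ) ^ 8342984578 ≡ 3070465723989 [MOD 3737657091169] := sq_step g2_48 (by norm_num) (by norm_num)
  have g2_50 : (37:ℕ) ^ 16685969156 ≡ 2594666793492 [MOD 3737657091169] := sq_step g2_49 (by norm_num) (by norm_num)
  have g2_51 : (37:ℕ) ^ 16685969157 ≡ 2561244079979 [MOD 3737657091169] := mul_step g2_50 (by norm_num) (by norm_num)
  have g2_52 : (37:ℕ) ^ 33371938314 ≡ 3201733752327 [MOD 3737657091169] := sq_step g2_51 (by norm_num) (by norm_num)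
  have g2_53 : (37:ℕ) ^ 66743876628 ≡ 3656935585099 [MOD 3737657091169] := sq_step g2_52 (by norm_num) (by norm_num)
  have g2_54 : (37:ℕ) ^ 133487753256 ≡ 2143395008517 [MOD 3737657091169] := sq_step g2_53 (by norm_num) (by norm_num)
  have g2_55 : (37:ℕ) ^ 266975506512 ≡ 1356532371231 [MOD 3737657091169] := sq_step g2_54 (by norm_num) (by norm_num)
  have g2_56 : (37:ℕ) ^ 533951013024 ≡ 2666335577295 [MOD 3737657091169] := sq_step g2_55 (by norm_num) (by norm_num)
  have hq2 : ((37 : ℕ) : ZMod 3737657091169) ^ ((3737657091169-1)/7) ≠ 1 := by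
    intro hcon
    have h2 : ((2666335577295:ℕ) : ZMod 3737657091169) = ((1:ℕ) : ZMod 3737657091169) := by
      rw [← zmod_pow_eq g2_56, hcon, Nat.cast_one]
    have h3 := Nat.ModEq.eq_of_lt_of_lt ((ZMod.natCast_eq_natCast_iff _ _ _).mp h2)
      (by norm_num) (by norm_num)
    norm_num at h3
  have g3_0 : (37:ℕ) ^ 1 ≡ 37 [MOD 3737657091169] := by rw [pow_one]
  have g3_1 : (37:ℕ) ^ 2 ≡ 1369 [MOD 3737657091169] := sq_step g3_0 (by norm_num) (by norm_num)
  have g3_2 : (37:ℕ) ^ 4 ≡ 1874161 [MOD 3737657091169] := sq_step g3_1 (by norm_num) (by norm_num)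
  have g3_3 : (37:ℕ) ^ 8 ≡ 3512479453921 [MOD 3737657091169] := sq_step g3_2 (by norm_num) (by norm_num)
  have g3_4 : (37:ℕ) ^ 9 ≡ 2881398695331 [MOD 3737657091169] := mul_step g3_3 (by norm_num) (by norm_num)
  have g3_5 : (37:ℕ) ^ 18 ≡ 1184133041241 [MOD 3737657091169] := sq_step g3_4 (by norm_num) (by norm_num)
  have g3_6 : (37:ℕ) ^ 19 ≡ 2698694523058 [MOD 3737657091169] := mul_step g3_5 (by norm_num) (by norm_num)
  have g3_7 : (37:ℕ) ^ 38 ≡ 3104357689578 [MOD 3737657091169] := sq_step g3_6 (by norm_num) (by norm_num)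
  have g3_8 : (37:ℕ) ^ 39 ≡ 2731521779316 [MOD 3737657091169] := mul_step g3_7 (by norm_num) (by norm_num)
  have g3_9 : (37:ℕ) ^ 78 ≡ 2692690968668 [MOD 3737657091169] := sq_step g3_8 (by norm_num) (by norm_num)
  have g3_10 : (37:ℕ) ^ 79 ≡ 2450481470322 [MOD 3737657091169] := mul_step g3_9 (by norm_num) (by norm_num)
  have g3_11 : (37:ℕ) ^ 158 ≡ 3133996641075 [MOD 3737657091169] := sq_step g3_10 (by norm_num) (by norm_num)
  have g3_12 : (37:ℕ) ^ 316 ≡ 2221396032652 [MOD 3737657091169] := sq_step g3_11 (by norm_num) (by norm_num)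
  have g3_13 : (37:ℕ) ^ 632 ≡ 948915312268 [MOD 3737657091169] := sq_step g3_12 (by norm_num) (by norm_num)
  have g3_14 : (37:ℕ) ^ 1264 ≡ 2475682175751 [MOD 3737657091169] := sq_step g3_13 (by norm_num) (by norm_num)
  have g3_15 : (37:ℕ) ^ 1265 ≡ 1896470314731 [MOD 3737657091169] := mul_step g3_14 (by norm_num) (by norm_num)
  have g3_16 : (37:ℕ) ^ 2530 ≡ 596690096137 [MOD 3737657091169] := sq_step g3_15 (by norm_num) (by norm_num)
  have g3_17 : (37:ℕ) ^ 2531 ≡ 3389248101224 [MOD 3737657091169] := mul_step g3_16 (by norm_num) (by norm_num)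
  have g3_18 : (37:ℕ) ^ 5062 ≡ 2005341454041 [MOD 3737657091169] := sq_step g3_17 (by norm_num) (by norm_num)
  have g3_19 : (37:ℕ) ^ 5063 ≡ 3182149067306 [MOD 3737657091169] := mul_step g3_18 (by norm_num) (by norm_num)
  have g3_20 : (37:ℕ) ^ 10126 ≡ 2127153752073 [MOD 3737657091169] := sq_step g3_19 (by norm_num) (by norm_num)
  have g3_21 : (37:ℕ) ^ 20252 ≡ 1485130072725 [MOD 3737657091169] := sq_step g3_20 (by norm_num) (by norm_num)
  have g3_22 : (37:ℕ) ^ 40504 ≡ 813171364368 [MOD 3737657091169] := sq_step g3_21 (by norm_num) (by norm_num)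
  have g3_23 : (37:ℕ) ^ 40505 ≡ 186083752264 [MOD 3737657091169] := mul_step g3_22 (by norm_num) (by norm_num)
  have g3_24 : (37:ℕ) ^ 81010 ≡ 2498328656560 [MOD 3737657091169] := sq_step g3_23 (by norm_num) (by norm_num)
  have g3_25 : (37:ℕ) ^ 81011 ≡ 2734390104664 [MOD 3737657091169] := mul_step g3_24 (by norm_num) (by norm_num)
  have g3_26 : (37:ℕ) ^ 162022 ≡ 92043926834 [MOD 3737657091169] := sq_step g3_25 (by norm_num) (by norm_num)
  have g3_27 : (37:ℕ) ^ 162023 ≡ 3405625292858 [MOD 3737657091169] := mul_step g3_26 (by norm_num) (by norm_num)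
  have g3_28 : (37:ℕ) ^ 324046 ≡ 665582640341 [MOD 3737657091169] := sq_step g3_27 (by norm_num) (by norm_num)
  have g3_29 : (37:ℕ) ^ 648092 ≡ 1139664103853 [MOD 3737657091169] := sq_step g3_28 (by norm_num) (by norm_num)
  have g3_30 : (37:ℕ) ^ 1296184 ≡ 2864649499624 [MOD 3737657091169] := sq_step g3_29 (by norm_num) (by norm_num)
  have g3_31 : (37:ℕ) ^ 2592368 ≡ 3588397003837 [MOD 3737657091169] := sq_step g3_30 (by norm_num) (by norm_num)
  have g3_32 : (37:ℕ) ^ 2592369 ≡ 1952690951054 [MOD 3737657091169] := mul_step g3_31 (by norm_num) (by norm_num)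
  have g3_33 : (37:ℕ) ^ 5184738 ≡ 2133038706231 [MOD 3737657091169] := sq_step g3_32 (by norm_num) (by norm_num)
  have g3_34 : (37:ℕ) ^ 10369476 ≡ 3324856522277 [MOD 3737657091169] := sq_step g3_33 (by norm_num) (by norm_num)
  have g3_35 : (37:ℕ) ^ 20738952 ≡ 907646685961 [MOD 3737657091169] := sq_step g3_34 (by norm_num) (by norm_num)
  have g3_36 : (37:ℕ) ^ 20738953 ≡ 3681670651205 [MOD 3737657091169] := mul_step g3_35 (by norm_num) (by norm_num)
  have g3_37 : (37:ℕ) ^ 41477906 ≡ 2207561385634 [MOD 3737657091169] := sq_step g3_36 (by norm_num) (by norm_num)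
  have g3_38 : (37:ℕ) ^ 82955812 ≡ 3434870831748 [MOD 3737657091169] := sq_step g3_37 (by norm_num) (by norm_num)
  have g3_39 : (37:ℕ) ^ 165911624 ≡ 1714526789779 [MOD 3737657091169] := sq_step g3_38 (by norm_num) (by norm_num)
  have g3_40 : (37:ℕ) ^ 165911625 ≡ 3634977763119 [MOD 3737657091169] := mul_step g3_39 (by norm_num) (by norm_num)
  have g3_41 : (37:ℕ) ^ 331823250 ≡ 1697626157597 [MOD 3737657091169] := sq_step g3_40 (by norm_num) (by norm_num)
  have g3_42 : (37:ℕ) ^ 663646500 ≡ 1647816358826 [MOD 3737657091169] := sq_step g3_41 (by norm_num) (by norm_num)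
  have g3_43 : (37:ℕ) ^ 1327293000 ≡ 2768862564080 [MOD 3737657091169] := sq_step g3_42 (by norm_num) (by norm_num)
  have g3_44 : (37:ℕ) ^ 1327293001 ≡ 1531173409397 [MOD 3737657091169] := mul_step g3_43 (by norm_num) (by norm_num)
  have g3_45 : (37:ℕ) ^ 2654586002 ≡ 2532482216630 [MOD 3737657091169] := sq_step g3_44 (by norm_num) (by norm_num)
  have g3_46 : (37:ℕ) ^ 5309172004 ≡ 534340824875 [MOD 3737657091169] := sq_step g3_45 (by norm_num) (by norm_num)
  have g3_47 : (37:ℕ) ^ 10618344008 ≡ 1957454557690 [MOD 3737657091169] := sq_step g3_46 (by norm_num) (by norm_num)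
  have g3_48 : (37:ℕ) ^ 10618344009 ≡ 1410333902319 [MOD 3737657091169] := mul_step g3_47 (by norm_num) (by norm_num)
  have g3_49 : (37:ℕ) ^ 21236688018 ≡ 2924549601749 [MOD 3737657091169] := sq_step g3_48 (by norm_num) (by norm_num)
  have g3_50 : (37:ℕ) ^ 42473376036 ≡ 2452460743676 [MOD 3737657091169] := sq_step g3_49 (by norm_num) (by norm_num)
  have g3_51 : (37:ℕ) ^ 84946752072 ≡ 838413461806 [MOD 3737657091169] := sq_step g3_50 (by norm_num) (by norm_num)
  have g3_52 : (37:ℕ) ^ 169893504144 ≡ 80859814342 [MOD 3737657091169] := sq_step g3_51 (by norm_num) (by norm_num)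
  have g3_53 : (37:ℕ) ^ 339787008288 ≡ 534451383217 [MOD 3737657091169] := sq_step g3_52 (by norm_num) (by norm_num)
  have hq3 : ((37 : ℕ) : ZMod 3737657091169) ^ ((3737657091169-1)/11) ≠ 1 := by
    intro hcon
    have h2 : ((534451383217:ℕ) : ZMod 3737657091169) = ((1:ℕ) : ZMod 3737657091169) := by
      rw [← zmod_pow_eq g3_53, hcon, Nat.cast_one]
    have h3 := Nat.ModEq.eq_of_lt_of_lt ((ZMod.natCast_eq_natCast_iff _ _ _).mp h2)
      (by norm_num) (by norm_num)
    norm_num at h3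
  have g4_0 : (37:ℕ) ^ 1 ≡ 37 [MOD 3737657091169] := by rw [pow_one]
  have g4_1 : (37:ℕ) ^ 2 ≡ 1369 [MOD 3737657091169] := sq_step g4_0 (by norm_num) (by norm_num)
  have g4_2 : (37:ℕ) ^ 4 ≡ 1874161 [MOD 3737657091169] := sq_step g4_1 (by norm_num) (by norm_num)
  have g4_3 : (37:ℕ) ^ 8 ≡ 3512479453921 [MOD 3737657091169] := sq_step g4_2 (by norm_num) (by norm_num)
  have g4_4 : (37:ℕ) ^ 16 ≡ 407666208638 [MOD 3737657091169] := sq_step g4_3 (by norm_num) (by norm_num)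
  have g4_5 : (37:ℕ) ^ 32 ≡ 1435716831634 [MOD 3737657091169] := sq_step g4_4 (by norm_num) (by norm_num)
  have g4_6 : (37:ℕ) ^ 33 ≡ 794323494092 [MOD 3737657091169] := mul_step g4_5 (by norm_num) (by norm_num)
  have g4_7 : (37:ℕ) ^ 66 ≡ 1876699549032 [MOD 3737657091169] := sq_step g4_6 (by norm_num) (by norm_num)
  have g4_8 : (37:ℕ) ^ 132 ≡ 194316365989 [MOD 3737657091169] := sq_step g4_7 (by norm_num) (by norm_num)
  have g4_9 : (37:ℕ) ^ 133 ≡ 3452048450424 [MOD 3737657091169] := mul_step g4_8 (by norm_num) (by norm_num)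
  have g4_10 : (37:ℕ) ^ 266 ≡ 1508361122829 [MOD 3737657091169] := sq_step g4_9 (by norm_num) (by norm_num)
  have g4_11 : (37:ℕ) ^ 267 ≡ 3482162268307 [MOD 3737657091169] := mul_step g4_10 (by norm_num) (by norm_num)
  have g4_12 : (37:ℕ) ^ 534 ≡ 1689342056829 [MOD 3737657091169] := sq_step g4_11 (by norm_num) (by norm_num)
  have g4_13 : (37:ℕ) ^ 535 ≡ 2703142643969 [MOD 3737657091169] := mul_step g4_12 (by norm_num) (by norm_num)
  have g4_14 : (37:ℕ) ^ 1070 ≡ 524587991876 [MOD 3737657091169] := sq_step g4_13 (by norm_num) (by norm_num)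
  have g4_15 : (37:ℕ) ^ 1071 ≡ 721470243567 [MOD 3737657091169] := mul_step g4_14 (by norm_num) (by norm_num)
  have g4_16 : (37:ℕ) ^ 2142 ≡ 2664797785543 [MOD 3737657091169] := sq_step g4_15 (by norm_num) (by norm_num)
  have g4_17 : (37:ℕ) ^ 4284 ≡ 1950326717871 [MOD 3737657091169] := sq_step g4_16 (by norm_num) (by norm_num)
  have g4_18 : (37:ℕ) ^ 8568 ≡ 93610856575 [MOD 3737657091169] := sq_step g4_17 (by norm_num) (by norm_num)
  have g4_19 : (37:ℕ) ^ 17136 ≡ 217809467862 [MOD 3737657091169] := sq_step g4_18 (by norm_num) (by norm_num)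
  have g4_20 : (37:ℕ) ^ 17137 ≡ 583636128556 [MOD 3737657091169] := mul_step g4_19 (by norm_num) (by norm_num)
  have g4_21 : (37:ℕ) ^ 34274 ≡ 1691107830904 [MOD 3737657091169] := sq_step g4_20 (by norm_num) (by norm_num)
  have g4_22 : (37:ℕ) ^ 68548 ≡ 3592647477752 [MOD 3737657091169] := sq_step g4_21 (by norm_num) (by norm_num)
  have g4_23 : (37:ℕ) ^ 137096 ≡ 375533065784 [MOD 3737657091169] := sq_step g4_22 (by norm_num) (by norm_num)
  have g4_24 : (37:ℕ) ^ 274192 ≡ 1181766440458 [MOD 3737657091169] := sq_step g4_23 (by norm_num) (by norm_num)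
  have g4_25 : (37:ℕ) ^ 548384 ≡ 116929770325 [MOD 3737657091169] := sq_step g4_24 (by norm_num) (by norm_num)
  have g4_26 : (37:ℕ) ^ 548385 ≡ 588744410856 [MOD 3737657091169] := mul_step g4_25 (by norm_num) (by norm_num)
  have g4_27 : (37:ℕ) ^ 1096770 ≡ 3348629852923 [MOD 3737657091169] := sq_step g4_26 (by norm_num) (by norm_num)
  have g4_28 : (37:ℕ) ^ 1096771 ≡ 556620549574 [MOD 3737657091169] := mul_step g4_27 (by norm_num) (by norm_num)
  have g4_29 : (37:ℕ) ^ 2193542 ≡ 633767622564 [MOD 3737657091169] := sq_step g4_28 (by norm_num) (by norm_num)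
  have g4_30 : (37:ℕ) ^ 2193543 ≡ 1023459487854 [MOD 3737657091169] := mul_step g4_29 (by norm_num) (by norm_num)
  have g4_31 : (37:ℕ) ^ 4387086 ≡ 1002261233747 [MOD 3737657091169] := sq_step g4_30 (by norm_num) (by norm_num)
  have g4_32 : (37:ℕ) ^ 8774172 ≡ 898147935263 [MOD 3737657091169] := sq_step g4_31 (by norm_num) (by norm_num)
  have g4_33 : (37:ℕ) ^ 17548344 ≡ 2042152347567 [MOD 3737657091169] := sq_step g4_32 (by norm_num) (by norm_num)
  have g4_34 : (37:ℕ) ^ 35096688 ≡ 145367253732 [MOD 3737657091169] := sq_step g4_33 (by norm_num) (by norm_num)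
  have g4_35 : (37:ℕ) ^ 35096689 ≡ 1640931296915 [MOD 3737657091169] := mul_step g4_34 (by norm_num) (by norm_num)
  have g4_36 : (37:ℕ) ^ 70193378 ≡ 2919130251015 [MOD 3737657091169] := sq_step g4_35 (by norm_num) (by norm_num)
  have g4_37 : (37:ℕ) ^ 70193379 ≡ 3353420734823 [MOD 3737657091169] := mul_step g4_36 (by norm_num) (by norm_num)
  have g4_38 : (37:ℕ) ^ 140386758 ≡ 2441459048783 [MOD 3737657091169] := sq_step g4_37 (by norm_num) (by norm_num)
  have g4_39 : (37:ℕ) ^ 140386759 ≡ 630214616915 [MOD 3737657091169] := mul_step g4_38 (by norm_num) (by norm_num)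
  have g4_40 : (37:ℕ) ^ 280773518 ≡ 2032670082428 [MOD 3737657091169] := sq_step g4_39 (by norm_num) (by norm_num)
  have g4_41 : (37:ℕ) ^ 280773519 ≡ 455651226456 [MOD 3737657091169] := mul_step g4_40 (by norm_num) (by norm_num)
  have g4_42 : (37:ℕ) ^ 561547038 ≡ 2687193399761 [MOD 3737657091169] := sq_step g4_41 (by norm_num) (by norm_num)
  have g4_43 : (37:ℕ) ^ 1123094076 ≡ 1827372525786 [MOD 3737657091169] := sq_step g4_42 (by norm_num) (by norm_num)
  have g4_44 : (37:ℕ) ^ 1123094077 ≡ 334955813040 [MOD 3737657091169] := mul_step g4_43 (by norm_num) (by norm_num)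
  have g4_45 : (37:ℕ) ^ 2246188154 ≡ 1853378876453 [MOD 3737657091169] := sq_step g4_44 (by norm_num) (by norm_num)
  have g4_46 : (37:ℕ) ^ 2246188155 ≡ 1297190787719 [MOD 3737657091169] := mul_step g4_45 (by norm_num) (by norm_num)
  have g4_47 : (37:ℕ) ^ 4492376310 ≡ 615216691065 [MOD 3737657091169] := sq_step g4_46 (by norm_num) (by norm_num)
  have g4_48 : (37:ℕ) ^ 4492376311 ≡ 337075022391 [MOD 3737657091169] := mul_step g4_47 (by norm_num) (by norm_num)
  have g4_49 : (37:ℕ) ^ 8984752622 ≡ 311916200817 [MOD 3737657091169] := sq_step g4_48 (by norm_num) (by norm_num)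
  have g4_50 : (37:ℕ) ^ 8984752623 ≡ 327928156722 [MOD 3737657091169] := mul_step g4_49 (by norm_num) (by norm_num)
  have g4_51 : (37:ℕ) ^ 17969505246 ≡ 3566495063115 [MOD 3737657091169] := sq_step g4_50 (by norm_num) (by norm_num)
  have g4_52 : (37:ℕ) ^ 35939010492 ≡ 1820885493182 [MOD 3737657091169] := sq_step g4_51 (by norm_num) (by norm_num)
  have g4_53 : (37:ℕ) ^ 71878020984 ≡ 3503470109568 [MOD 3737657091169] := sq_step g4_52 (by norm_num) (by norm_num)
  have g4_54 : (37:ℕ) ^ 143756041968 ≡ 506705312944 [MOD 3737657091169] := sq_step g4_53 (by norm_num) (by norm_num)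
  have g4_55 : (37:ℕ) ^ 287512083936 ≡ 3582441521450 [MOD 3737657091169] := sq_step g4_54 (by norm_num) (by norm_num)
  have hq4 : ((37 : ℕ) : ZMod 3737657091169) ^ ((3737657091169-1)/13) ≠ 1 := by
    intro hcon
    have h2 : ((3582441521450:ℕ) : ZMod 3737657091169) = ((1:ℕ) : ZMod 3737657091169) := by
      rw [← zmod_pow_eq g4_55, hcon, Nat.cast_one]
    have h3 := Nat.ModEq.eq_of_lt_of_lt ((ZMod.natCast_eq_natCast_iff _ _ _).mp h2)
      (by norm_num) (by norm_num)
    norm_num at h3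
  have g5_0 : (37:ℕ) ^ 1 ≡ 37 [MOD 3737657091169] := by rw [pow_one]
  have g5_1 : (37:ℕ) ^ 2 ≡ 1369 [MOD 3737657091169] := sq_step g5_0 (by norm_num) (by norm_num)
  have g5_2 : (37:ℕ) ^ 4 ≡ 1874161 [MOD 3737657091169] := sq_step g5_1 (by norm_num) (by norm_num)
  have g5_3 : (37:ℕ) ^ 5 ≡ 69343957 [MOD 3737657091169] := mul_step g5_2 (by norm_num) (by norm_num)
  have g5_4 : (37:ℕ) ^ 10 ≡ 1957353174515 [MOD 3737657091169] := sq_step g5_3 (by norm_num) (by norm_num)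
  have g5_5 : (37:ℕ) ^ 11 ≡ 1406582724844 [MOD 3737657091169] := mul_step g5_4 (by norm_num) (by norm_num)
  have g5_6 : (37:ℕ) ^ 22 ≡ 3378538224206 [MOD 3737657091169] := sq_step g5_5 (by norm_num) (by norm_num)
  have g5_7 : (37:ℕ) ^ 44 ≡ 2121555600614 [MOD 3737657091169] := sq_step g5_6 (by norm_num) (by norm_num)
  have g5_8 : (37:ℕ) ^ 45 ≡ 6758308169 [MOD 3737657091169] := mul_step g5_7 (by norm_num) (by norm_num)
  have g5_9 : (37:ℕ) ^ 90 ≡ 2742180368380 [MOD 3737657091169] := sq_step g5_8 (by norm_num) (by norm_num)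
  have g5_10 : (37:ℕ) ^ 91 ≡ 543932168497 [MOD 3737657091169] := mul_step g5_9 (by norm_num) (by norm_num)
  have g5_11 : (37:ℕ) ^ 182 ≡ 444640025049 [MOD 3737657091169] := sq_step g5_10 (by norm_num) (by norm_num)
  have g5_12 : (37:ℕ) ^ 183 ≡ 1501052562137 [MOD 3737657091169] := mul_step g5_11 (by norm_num) (by norm_num)
  have g5_13 : (37:ℕ) ^ 366 ≡ 2109841357415 [MOD 3737657091169] := sq_step g5_12 (by norm_num) (by norm_num)
  have g5_14 : (37:ℕ) ^ 732 ≡ 1037282157318 [MOD 3737657091169] := sq_step g5_13 (by norm_num) (by norm_num)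
  have g5_15 : (37:ℕ) ^ 1464 ≡ 1764031351881 [MOD 3737657091169] := sq_step g5_14 (by norm_num) (by norm_num)
  have g5_16 : (37:ℕ) ^ 1465 ≡ 1728989469724 [MOD 3737657091169] := mul_step g5_15 (by norm_num) (by norm_num)
  have g5_17 : (37:ℕ) ^ 2930 ≡ 63991166067 [MOD 3737657091169] := sq_step g5_16 (by norm_num) (by norm_num)
  have g5_18 : (37:ℕ) ^ 2931 ≡ 2367673144479 [MOD 3737657091169] := mul_step g5_17 (by norm_num) (by norm_num)
  have g5_19 : (37:ℕ) ^ 5862 ≡ 1235946257965 [MOD 3737657091169] := sq_step g5_18 (by norm_num) (by norm_num)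
  have g5_20 : (37:ℕ) ^ 11724 ≡ 3735347170750 [MOD 3737657091169] := sq_step g5_19 (by norm_num) (by norm_num)
  have g5_21 : (37:ℕ) ^ 11725 ≡ 3652190035666 [MOD 3737657091169] := mul_step g5_20 (by norm_num) (by norm_num)
  have g5_22 : (37:ℕ) ^ 23450 ≡ 3101515387975 [MOD 3737657091169] := sq_step g5_21 (by norm_num) (by norm_num)
  have g5_23 : (37:ℕ) ^ 46900 ≡ 581345806265 [MOD 3737657091169] := sq_step g5_22 (by norm_num) (by norm_num)
  have g5_24 : (37:ℕ) ^ 46901 ≡ 2821509375960 [MOD 3737657091169] := mul_step g5_23 (by norm_num) (by norm_num)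
  have g5_25 : (37:ℕ) ^ 93802 ≡ 1689017432190 [MOD 3737657091169] := sq_step g5_24 (by norm_num) (by norm_num)
  have g5_26 : (37:ℕ) ^ 187604 ≡ 1161087546451 [MOD 3737657091169] := sq_step g5_25 (by norm_num) (by norm_num)
  have g5_27 : (37:ℕ) ^ 187605 ≡ 1846011215828 [MOD 3737657091169] := mul_step g5_26 (by norm_num) (by norm_num)
  have g5_28 : (37:ℕ) ^ 375210 ≡ 1849971576335 [MOD 3737657091169] := sq_step g5_27 (by norm_num) (by norm_num)
  have g5_29 : (37:ℕ) ^ 375211 ≡ 1171120683353 [MOD 3737657091169] := mul_step g5_28 (by norm_num) (by norm_num)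
  have g5_30 : (37:ℕ) ^ 750422 ≡ 2229437540801 [MOD 3737657091169] := sq_step g5_29 (by norm_num) (by norm_num)
  have g5_31 : (37:ℕ) ^ 1500844 ≡ 3002555263310 [MOD 3737657091169] := sq_step g5_30 (by norm_num) (by norm_num)
  have g5_32 : (37:ℕ) ^ 1500845 ≡ 2702489098569 [MOD 3737657091169] := mul_step g5_31 (by norm_num) (by norm_num)
  have g5_33 : (37:ℕ) ^ 3001690 ≡ 1668282211522 [MOD 3737657091169] := sq_step g5_32 (by norm_num) (by norm_num)
  have g5_34 : (37:ℕ) ^ 6003380 ≡ 741126586174 [MOD 3737657091169] := sq_step g5_33 (by norm_num) (by norm_num)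
  have g5_35 : (37:ℕ) ^ 6003381 ≡ 1258084050255 [MOD 3737657091169] := mul_step g5_34 (by norm_num) (by norm_num)
  have g5_36 : (37:ℕ) ^ 12006762 ≡ 2477139191980 [MOD 3737657091169] := sq_step g5_35 (by norm_num) (by norm_num)
  have g5_37 : (37:ℕ) ^ 24013524 ≡ 1940788997876 [MOD 3737657091169] := sq_step g5_36 (by norm_num) (by norm_num)
  have g5_38 : (37:ℕ) ^ 48027048 ≡ 3452380023446 [MOD 3737657091169] := sq_step g5_37 (by norm_num) (by norm_num)
  have g5_39 : (37:ℕ) ^ 48027049 ≡ 657719767756 [MOD 3737657091169] := mul_step g5_38 (by norm_num) (by norm_num)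
  have g5_40 : (37:ℕ) ^ 96054098 ≡ 3058596831653 [MOD 3737657091169] := sq_step g5_39 (by norm_num) (by norm_num)
  have g5_41 : (37:ℕ) ^ 192108196 ≡ 2703372637819 [MOD 3737657091169] := sq_step g5_40 (by norm_num) (by norm_num)
  have g5_42 : (37:ℕ) ^ 192108197 ≡ 2845703228909 [MOD 3737657091169] := mul_step g5_41 (by norm_num) (by norm_num)
  have g5_43 : (37:ℕ) ^ 384216394 ≡ 2924845729886 [MOD 3737657091169] := sq_step g5_42 (by norm_num) (by norm_num)
  have g5_44 : (37:ℕ) ^ 384216395 ≡ 3564893453050 [MOD 3737657091169] := mul_step g5_43 (by norm_num) (by norm_num)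
  have g5_45 : (37:ℕ) ^ 768432790 ≡ 3615527662263 [MOD 3737657091169] := sq_step g5_44 (by norm_num) (by norm_num)
  have g5_46 : (37:ℕ) ^ 1536865580 ≡ 3319607248027 [MOD 3737657091169] := sq_step g5_45 (by norm_num) (by norm_num)
  have g5_47 : (37:ℕ) ^ 3073731160 ≡ 2679037495707 [MOD 3737657091169] := sq_step g5_46 (by norm_num) (by norm_num)
  have g5_48 : (37:ℕ) ^ 6147462320 ≡ 3565597685294 [MOD 3737657091169] := sq_step g5_47 (by norm_num) (by norm_num)
  have g5_49 : (37:ℕ) ^ 6147462321 ≡ 1109116164963 [MOD 3737657091169] := mul_step g5_48 (by norm_num) (by norm_num)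
  have g5_50 : (37:ℕ) ^ 12294924642 ≡ 2685615468275 [MOD 3737657091169] := sq_step g5_49 (by norm_num) (by norm_num)
  have g5_51 : (37:ℕ) ^ 24589849284 ≡ 1947488980042 [MOD 3737657091169] := sq_step g5_50 (by norm_num) (by norm_num)
  have g5_52 : (37:ℕ) ^ 49179698568 ≡ 2834129539122 [MOD 3737657091169] := sq_step g5_51 (by norm_num) (by norm_num)
  have g5_53 : (37:ℕ) ^ 98359397136 ≡ 803823924408 [MOD 3737657091169] := sq_step g5_52 (by norm_num) (by norm_num)
  have g5_54 : (37:ℕ) ^ 196718794272 ≡ 2390673647215 [MOD 3737657091169] := sq_step g5_53 (by norm_num) (by norm_num)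
  have hq5 : ((37 : ℕ) : ZMod 3737657091169) ^ ((3737657091169-1)/19) ≠ 1 := by
    intro hcon
    have h2 : ((2390673647215:ℕ) : ZMod 3737657091169) = ((1:ℕ) : ZMod 3737657091169) := by
      rw [← zmod_pow_eq g5_54, hcon, Nat.cast_one]
    have h3 := Nat.ModEq.eq_of_lt_of_lt ((ZMod.natCast_eq_natCast_iff _ _ _).mp h2)
      (by norm_num) (by norm_num)
    norm_num at h3
  have g6_0 : (37:ℕ) ^ 1 ≡ 37 [MOD 3737657091169] := by rw [pow_one]
  have g6_1 : (37:ℕ) ^ 2 ≡ 1369 [MOD 3737657091169] := sq_step g6_0 (by norm_num) (by norm_num)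
  have g6_2 : (37:ℕ) ^ 4 ≡ 1874161 [MOD 3737657091169] := sq_step g6_1 (by norm_num) (by norm_num)
  have g6_3 : (37:ℕ) ^ 5 ≡ 69343957 [MOD 3737657091169] := mul_step g6_2 (by norm_num) (by norm_num)
  have g6_4 : (37:ℕ) ^ 10 ≡ 1957353174515 [MOD 3737657091169] := sq_step g6_3 (by norm_num) (by norm_num)
  have g6_5 : (37:ℕ) ^ 11 ≡ 1406582724844 [MOD 3737657091169] := mul_step g6_4 (by norm_num) (by norm_num)
  have g6_6 : (37:ℕ) ^ 22 ≡ 3378538224206 [MOD 3737657091169] := sq_step g6_5 (by norm_num) (by norm_num)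
  have g6_7 : (37:ℕ) ^ 23 ≡ 1663230287045 [MOD 3737657091169] := mul_step g6_6 (by norm_num) (by norm_num)
  have g6_8 : (37:ℕ) ^ 46 ≡ 250057402253 [MOD 3737657091169] := sq_step g6_7 (by norm_num) (by norm_num)
  have g6_9 : (37:ℕ) ^ 92 ≡ 1437204778544 [MOD 3737657091169] := sq_step g6_8 (by norm_num) (by norm_num)
  have g6_10 : (37:ℕ) ^ 184 ≡ 3211745522703 [MOD 3737657091169] := sq_step g6_9 (by norm_num) (by norm_num)
  have g6_11 : (37:ℕ) ^ 368 ≡ 2901543918667 [MOD 3737657091169] := sq_step g6_10 (by norm_num) (by norm_num)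
  have g6_12 : (37:ℕ) ^ 736 ≡ 3558982439918 [MOD 3737657091169] := sq_step g6_11 (by norm_num) (by norm_num)
  have g6_13 : (37:ℕ) ^ 737 ≡ 864352086051 [MOD 3737657091169] := mul_step g6_12 (by norm_num) (by norm_num)
  have g6_14 : (37:ℕ) ^ 1474 ≡ 1966929082275 [MOD 3737657091169] := sq_step g6_13 (by norm_num) (by norm_num)
  have g6_15 : (37:ℕ) ^ 1475 ≡ 1760891311964 [MOD 3737657091169] := mul_step g6_14 (by norm_num) (by norm_num)
  have g6_16 : (37:ℕ) ^ 2950 ≡ 2687463041739 [MOD 3737657091169] := sq_step g6_15 (by norm_num) (by norm_num)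
  have g6_17 : (37:ℕ) ^ 5900 ≡ 2388206181636 [MOD 3737657091169] := sq_step g6_16 (by norm_num) (by norm_num)
  have g6_18 : (37:ℕ) ^ 5901 ≡ 2397515623645 [MOD 3737657091169] := mul_step g6_17 (by norm_num) (by norm_num)
  have g6_19 : (37:ℕ) ^ 11802 ≡ 2109051105406 [MOD 3737657091169] := sq_step g6_18 (by norm_num) (by norm_num)
  have g6_20 : (37:ℕ) ^ 11803 ≡ 3281749076642 [MOD 3737657091169] := mul_step g6_19 (by norm_num) (by norm_num)
  have g6_21 : (37:ℕ) ^ 23606 ≡ 1287648472664 [MOD 3737657091169] := sq_step g6_20 (by norm_num) (by norm_num)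
  have g6_22 : (37:ℕ) ^ 47212 ≡ 2583598616922 [MOD 3737657091169] := sq_step g6_21 (by norm_num) (by norm_num)
  have g6_23 : (37:ℕ) ^ 94424 ≡ 912185197226 [MOD 3737657091169] := sq_step g6_22 (by norm_num) (by norm_num)
  have g6_24 : (37:ℕ) ^ 188848 ≡ 2525237358161 [MOD 3737657091169] := sq_step g6_23 (by norm_num) (by norm_num)
  have g6_25 : (37:ℕ) ^ 377696 ≡ 1798515705568 [MOD 3737657091169] := sq_step g6_24 (by norm_num) (by norm_num)
  have g6_26 : (37:ℕ) ^ 755392 ≡ 471663896111 [MOD 3737657091169] := sq_step g6_25 (by norm_num) (by norm_num)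
  have g6_27 : (37:ℕ) ^ 1510784 ≡ 2128713587042 [MOD 3737657091169] := sq_step g6_26 (by norm_num) (by norm_num)
  have g6_28 : (37:ℕ) ^ 3021568 ≡ 285484919279 [MOD 3737657091169] := sq_step g6_27 (by norm_num) (by norm_num)
  have g6_29 : (37:ℕ) ^ 3021569 ≡ 3087627830985 [MOD 3737657091169] := mul_step g6_28 (by norm_num) (by norm_num)
  have g6_30 : (37:ℕ) ^ 6043138 ≡ 1778115567143 [MOD 3737657091169] := sq_step g6_29 (by norm_num) (by norm_num)
  have g6_31 : (37:ℕ) ^ 12086276 ≡ 2556616348017 [MOD 3737657091169] := sq_step g6_30 (by norm_num) (by norm_num)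
  have g6_32 : (37:ℕ) ^ 12086277 ≡ 1153377597404 [MOD 3737657091169] := mul_step g6_31 (by norm_num) (by norm_num)
  have g6_33 : (37:ℕ) ^ 24172554 ≡ 1567690402234 [MOD 3737657091169] := sq_step g6_32 (by norm_num) (by norm_num)
  have g6_34 : (37:ℕ) ^ 48345108 ≡ 2459715469908 [MOD 3737657091169] := sq_step g6_33 (by norm_num) (by norm_num)
  have g6_35 : (37:ℕ) ^ 48345109 ≡ 1305702198540 [MOD 3737657091169] := mul_step g6_34 (by norm_num) (by norm_num)
  have g6_36 : (37:ℕ) ^ 96690218 ≡ 1407434205852 [MOD 3737657091169] := sq_step g6_35 (by norm_num) (by norm_num)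
  have g6_37 : (37:ℕ) ^ 193380436 ≡ 3146505221256 [MOD 3737657091169] := sq_step g6_36 (by norm_num) (by norm_num)
  have g6_38 : (37:ℕ) ^ 193380437 ≡ 553323360233 [MOD 3737657091169] := mul_step g6_37 (by norm_num) (by norm_num)
  have g6_39 : (37:ℕ) ^ 386760874 ≡ 2645626727581 [MOD 3737657091169] := sq_step g6_38 (by norm_num) (by norm_num)
  have g6_40 : (37:ℕ) ^ 773521748 ≡ 1861551796657 [MOD 3737657091169] := sq_step g6_39 (by norm_num) (by norm_num)
  have g6_41 : (37:ℕ) ^ 773521749 ≡ 1599588835267 [MOD 3737657091169] := mul_step g6_40 (by norm_num) (by norm_num)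
  have g6_42 : (37:ℕ) ^ 1547043498 ≡ 2867876284399 [MOD 3737657091169] := sq_step g6_41 (by norm_num) (by norm_num)
  have g6_43 : (37:ℕ) ^ 3094086996 ≡ 1021302024730 [MOD 3737657091169] := sq_step g6_42 (by norm_num) (by norm_num)
  have g6_44 : (37:ℕ) ^ 6188173992 ≡ 1363007325934 [MOD 3737657091169] := sq_step g6_43 (by norm_num) (by norm_num)
  have g6_45 : (37:ℕ) ^ 12376347984 ≡ 2185180804408 [MOD 3737657091169] := sq_step g6_44 (by norm_num) (by norm_num)
  have g6_46 : (37:ℕ) ^ 24752695968 ≡ 2933596896615 [MOD 3737657091169] := sq_step g6_45 (by norm_num) (by norm_num)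
  have hq6 : ((37 : ℕ) : ZMod 3737657091169) ^ ((3737657091169-1)/151) ≠ 1 := by
    intro hcon
    have h2 : ((2933596896615:ℕ) : ZMod 3737657091169) = ((1:ℕ) : ZMod 3737657091169) := by
      rw [← zmod_pow_eq g6_46, hcon, Nat.cast_one]
    have h3 := Nat.ModEq.eq_of_lt_of_lt ((ZMod.natCast_eq_natCast_iff _ _ _).mp h2)
      (by norm_num) (by norm_num)
    norm_num at h3
  have g7_0 : (37:ℕ) ^ 1 ≡ 37 [MOD 3737657091169] := by rw [pow_one]
  have g7_1 : (37:ℕ) ^ 2 ≡ 1369 [MOD 3737657091169] := sq_step g7_0 (by norm_num) (by norm_num)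
  have g7_2 : (37:ℕ) ^ 3 ≡ 50653 [MOD 3737657091169] := mul_step g7_1 (by norm_num) (by norm_num)
  have g7_3 : (37:ℕ) ^ 6 ≡ 2565726409 [MOD 3737657091169] := sq_step g7_2 (by norm_num) (by norm_num)
  have g7_4 : (37:ℕ) ^ 12 ≡ 3454018634031 [MOD 3737657091169] := sq_step g7_3 (by norm_num) (by norm_num)
  have g7_5 : (37:ℕ) ^ 24 ≡ 1737007161961 [MOD 3737657091169] := sq_step g7_4 (by norm_num) (by norm_num)
  have g7_6 : (37:ℕ) ^ 48 ≡ 2201788387978 [MOD 3737657091169] := sq_step g7_5 (by norm_num) (by norm_num)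
  have g7_7 : (37:ℕ) ^ 49 ≡ 2975371440637 [MOD 3737657091169] := mul_step g7_6 (by norm_num) (by norm_num)
  have g7_8 : (37:ℕ) ^ 98 ≡ 2407672072154 [MOD 3737657091169] := sq_step g7_7 (by norm_num) (by norm_num)
  have g7_9 : (37:ℕ) ^ 196 ≡ 256076011543 [MOD 3737657091169] := sq_step g7_8 (by norm_num) (by norm_num)
  have g7_10 : (37:ℕ) ^ 197 ≡ 1999498244753 [MOD 3737657091169] := mul_step g7_9 (by norm_num) (by norm_num)
  have g7_11 : (37:ℕ) ^ 394 ≡ 3451229434528 [MOD 3737657091169] := sq_step g7_10 (by norm_num) (by norm_num)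
  have g7_12 : (37:ℕ) ^ 788 ≡ 1473012447822 [MOD 3737657091169] := sq_step g7_11 (by norm_num) (by norm_num)
  have g7_13 : (37:ℕ) ^ 1576 ≡ 336407009718 [MOD 3737657091169] := sq_step g7_12 (by norm_num) (by norm_num)
  have g7_14 : (37:ℕ) ^ 1577 ≡ 1234088086059 [MOD 3737657091169] := mul_step g7_13 (by norm_num) (by norm_num)
  have g7_15 : (37:ℕ) ^ 3154 ≡ 2536735719855 [MOD 3737657091169] := sq_step g7_14 (by norm_num) (by norm_num)
  have g7_16 : (37:ℕ) ^ 3155 ≡ 417794355410 [MOD 3737657091169] := mul_step g7_15 (by norm_num) (by norm_num)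
  have g7_17 : (37:ℕ) ^ 6310 ≡ 3471841567542 [MOD 3737657091169] := sq_step g7_16 (by norm_num) (by norm_num)
  have g7_18 : (37:ℕ) ^ 12620 ≡ 3187817103005 [MOD 3737657091169] := sq_step g7_17 (by norm_num) (by norm_num)
  have g7_19 : (37:ℕ) ^ 25240 ≡ 2763996176786 [MOD 3737657091169] := sq_step g7_18 (by norm_num) (by norm_num)
  have g7_20 : (37:ℕ) ^ 25241 ≡ 1351117079519 [MOD 3737657091169] := mul_step g7_19 (by norm_num) (by norm_num)
  have g7_21 : (37:ℕ) ^ 50482 ≡ 3501258156835 [MOD 3737657091169] := sq_step g7_20 (by norm_num) (by norm_num)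
  have g7_22 : (37:ℕ) ^ 100964 ≡ 225828324759 [MOD 3737657091169] := sq_step g7_21 (by norm_num) (by norm_num)
  have g7_23 : (37:ℕ) ^ 201928 ≡ 2945966715926 [MOD 3737657091169] := sq_step g7_22 (by norm_num) (by norm_num)
  have g7_24 : (37:ℕ) ^ 403856 ≡ 678008402109 [MOD 3737657091169] := sq_step g7_23 (by norm_num) (by norm_num)
  have g7_25 : (37:ℕ) ^ 807712 ≡ 831002656762 [MOD 3737657091169] := sq_step g7_24 (by norm_num) (by norm_num)
  have g7_26 : (37:ℕ) ^ 807713 ≡ 845841570842 [MOD 3737657091169] := mul_step g7_25 (by norm_num) (by norm_num)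
  have g7_27 : (37:ℕ) ^ 1615426 ≡ 1437518248143 [MOD 3737657091169] := sq_step g7_26 (by norm_num) (by norm_num)
  have g7_28 : (37:ℕ) ^ 3230852 ≡ 3361075474823 [MOD 3737657091169] := sq_step g7_27 (by norm_num) (by norm_num)
  have g7_29 : (37:ℕ) ^ 6461704 ≡ 564586275615 [MOD 3737657091169] := sq_step g7_28 (by norm_num) (by norm_num)
  have g7_30 : (37:ℕ) ^ 6461705 ≡ 2201406741910 [MOD 3737657091169] := mul_step g7_29 (by norm_num) (by norm_num)
  have g7_31 : (37:ℕ) ^ 12923410 ≡ 1662900579011 [MOD 3737657091169] := sq_step g7_30 (by norm_num) (by norm_num)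
  have g7_32 : (37:ℕ) ^ 25846820 ≡ 2086847632007 [MOD 3737657091169] := sq_step g7_31 (by norm_num) (by norm_num)
  have g7_33 : (37:ℕ) ^ 25846821 ≡ 2460220560879 [MOD 3737657091169] := mul_step g7_32 (by norm_num) (by norm_num)
  have g7_34 : (37:ℕ) ^ 51693642 ≡ 294548699656 [MOD 3737657091169] := sq_step g7_33 (by norm_num) (by norm_num)
  have g7_35 : (37:ℕ) ^ 103387284 ≡ 817409371445 [MOD 3737657091169] := sq_step g7_34 (by norm_num) (by norm_num)
  have g7_36 : (37:ℕ) ^ 206774568 ≡ 2397932799858 [MOD 3737657091169] := sq_step g7_35 (by norm_num) (by norm_num)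
  have g7_37 : (37:ℕ) ^ 413549136 ≡ 2416347586403 [MOD 3737657091169] := sq_step g7_36 (by norm_num) (by norm_num)
  have g7_38 : (37:ℕ) ^ 827098272 ≡ 3604766820103 [MOD 3737657091169] := sq_step g7_37 (by norm_num) (by norm_num)
  have hq7 : ((37 : ℕ) : ZMod 3737657091169) ^ ((3737657091169-1)/4519) ≠ 1 := by
    intro hcon
    have h2 : ((3604766820103:ℕ) : ZMod 3737657091169) = ((1:ℕ) : ZMod 3737657091169) := by
      rw [← zmod_pow_eq g7_38, hcon, Nat.cast_one]
    have h3 := Nat.ModEq.eq_of_lt_of_lt ((ZMod.natCast_eq_natCast_iff _ _ _).mp h2)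
      (by norm_num) (by norm_num)
    norm_num at h3
  refine lucas_primality 3737657091169 ((37 : ℕ) : ZMod 3737657091169) hful ?_
  intro q hq hdv
  have hd' : q ∣ 2^5 * (3^2 * (7 * (11 * (13 * (19 * (151 * 4519)))))) := by
    have : (3737657091169:ℕ) - 1 = 2^5 * (3^2 * (7 * (11 * (13 * (19 * (151 * 4519)))))) := by norm_num
    exact this ▸ hdv
  rcases (Nat.Prime.dvd_mul hq).mp hd' with h|h
  · have := (Nat.prime_dvd_prime_iff_eq hq (by norm_num)).mp (hq.dvd_of_dvd_pow h); subst this; exact hq0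
  rcases (Nat.Prime.dvd_mul hq).mp h with h|h
  · have := (Nat.prime_dvd_prime_iff_eq hq (by norm_num)).mp (hq.dvd_of_dvd_pow h); subst this; exact hq1
  rcases (Nat.Prime.dvd_mul hq).mp h with h|h
  · have := (Nat.prime_dvd_prime_iff_eq hq (by norm_num)).mp h; subst this; exact hq2
  rcases (Nat.Prime.dvd_mul hq).mp h with h|h
  · have := (Nat.prime_dvd_prime_iff_eq hq (by norm_num)).mp h; subst this; exact hq3
  rcases (Nat.Prime.dvd_mul hq).mp h with h|h
  · have := (Nat.prime_dvd_prime_iff_eq hq (by norm_num)).mp h; subst this; exact hq4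
  rcases (Nat.Prime.dvd_mul hq).mp h with h|h
  · have := (Nat.prime_dvd_prime_iff_eq hq (by norm_num)).mp h; subst this; exact hq5
  rcases (Nat.Prime.dvd_mul hq).mp h with h|h
  · have := (Nat.prime_dvd_prime_iff_eq hq (by norm_num)).mp h; subst this; exact hq6
  · have := (Nat.prime_dvd_prime_iff_eq hq (by norm_num)).mp h; subst this; exact hq7


lemma S_step {p x q m : ℕ} (hx : x ∈ S p m) (hq : q.Prime) (h3 : q ≠ 3)
    (hd : q ∣ Phi3 x) : q ∈ S p (m + 1) := by
  right
  exact Set.mem_biUnion hx ⟨hq, h3, hd⟩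

lemma sigma_pp_dvd {p k n : ℕ} (hp : p.Prime) (hn : 0 < n) (hperf : Nat.Perfect n)
    (hd : p ^ k ∣ n) (hg : Nat.gcd (p ^ k) (n / p ^ k) = 1) :
    (∑ i ∈ Finset.range (k + 1), p ^ i) ∣ 2 * n := by
  have hσ : ∑ d ∈ n.divisors, d = 2 * n :=
    (Nat.perfect_iff_sum_divisors_eq_two_mul hn).mp hperf
  have hmul : ArithmeticFunction.sigma 1 n
      = ArithmeticFunction.sigma 1 (p ^ k) * ArithmeticFunction.sigma 1 (n / p ^ k) := by
    rw [← ArithmeticFunction.isMultiplicative_sigma.map_mul_of_coprime hg,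
      Nat.mul_div_cancel' hd]
  rw [← ArithmeticFunction.sigma_one_apply_prime_pow hp, ← hσ,
    ← ArithmeticFunction.sigma_one_apply]
  exact hmul ▸ Dvd.intro _ rfl

lemma dvd31 (k : ℕ) (hk : 3 ∣ k) : 31 ∣ ∑ i ∈ Finset.range k, 5 ^ i := by
  have h := geom_sum_mul_add (4 : ℕ) k
  norm_num at h
  obtain ⟨j, rfl⟩ := hk
  have h2 : (124 : ℕ) ∣ 5 ^ (3 * j) - 1 := by
    rw [pow_mul]
    have := Nat.sub_dvd_pow_sub_pow 125 1 j
    simpa using this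
  rw [← h, Nat.add_sub_cancel] at h2
  have h3 : 4 * 31 ∣ 4 * ∑ i ∈ Finset.range (3 * j), 5 ^ i := by
    rw [mul_comm 4 _]; convert h2 using 1 <;> ring
  exact (Nat.mul_dvd_mul_iff_left (show 0 < 4 by norm_num)).mp h3

lemma dvd13 (k : ℕ) (hk : 3 ∣ k) : 13 ∣ ∑ i ∈ Finset.range k, 3 ^ i := by
  have h := geom_sum_mul_add (2 : ℕ) k
  norm_num at h
  obtain ⟨j, rfl⟩ := hk
  have h2 : (26 : ℕ) ∣ 3 ^ (3 * j) - 1 := by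
    rw [pow_mul]
    have := Nat.sub_dvd_pow_sub_pow 27 1 j
    simpa using this
  rw [← h, Nat.add_sub_cancel] at h2
  have h3 : 2 * 13 ∣ 2 * ∑ i ∈ Finset.range (3 * j), 3 ^ i := by
    rw [mul_comm 2 _]; convert h2 using 1 <;> ring
  exact (Nat.mul_dvd_mul_iff_left (show 0 < 2 by norm_num)).mp h3

lemma good31 : IsGood 31 := by
  refine ⟨by norm_num, by norm_num, 1, 331, ?_, by norm_num, Or.inl (by norm_num)⟩
  exact S_step (p := 31) (m := 0) rfl (by norm_num) (by norm_num) ⟨3, by norm_num [Phi3]⟩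

lemma good13 : IsGood 13 := by
  have h0 : (13 : ℕ) ∈ S 13 0 := rfl
  have h1 : (61 : ℕ) ∈ S 13 1 :=
    S_step h0 (by norm_num) (by norm_num) ⟨3, by norm_num [Phi3]⟩
  have h2 : (97 : ℕ) ∈ S 13 2 :=
    S_step h1 (by norm_num) (by norm_num) ⟨39, by norm_num [Phi3]⟩
  have h3 : (3169 : ℕ) ∈ S 13 3 :=
    S_step h2 (by norm_num) (by norm_num) ⟨3, by norm_num [Phi3]⟩
  have h4 : (3348577 : ℕ) ∈ S 13 4 :=
    S_step h3 (by norm_num) (by norm_num) ⟨3, by norm_num [Phi3]⟩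
  have h5 : (3737657091169 : ℕ) ∈ S 13 5 :=
    S_step h4 big_prime (by norm_num) ⟨3, by norm_num [Phi3]⟩
  have h6 : (181 : ℕ) ∈ S 13 6 :=
    S_step h5 (by norm_num) (by norm_num) ⟨77182765365578165938551, by norm_num [Phi3]⟩
  have h7 : (79 : ℕ) ∈ S 13 7 :=
    S_step h6 (by norm_num) (by norm_num) ⟨417, by norm_num [Phi3]⟩
  exact ⟨by norm_num, by norm_num, 7, 79, h7, by norm_num, Or.inl (by norm_num)⟩

theorem good_prime_divisor_of_odd_perfect (n α b : ℕ) (hα : 0 < α) (hb : 0 < b)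
    (hodd : Odd n) (hperf : Nat.Perfect n) (h15 : 15 ∣ n)
    (h5 : 5 ^ α ∣ n ∧ Nat.gcd (5 ^ α) (n / 5 ^ α) = 1)
    (h3 : 3 ^ (2 * b) ∣ n ∧ Nat.gcd (3 ^ (2 * b)) (n / 3 ^ (2 * b)) = 1)
    (hdvd : 3 ∣ (α + 1) * (2 * b + 1)) :
    ∃ p : ℕ, p.Prime ∧ p ∣ n ∧ IsGood p := by
  have hn0 : 0 < n := hperf.2
  rcases (Nat.Prime.dvd_mul Nat.prime_three).mp hdvd with hc | hc
  · -- 3 ∣ α + 1 : use 31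
    have hsum := sigma_pp_dvd (Nat.prime_five) hn0 hperf h5.1 h5.2
    have h31 : (31 : ℕ) ∣ 2 * n := dvd_trans (dvd31 (α + 1) hc) hsum
    have h31n : (31 : ℕ) ∣ n := by
      rcases (Nat.Prime.dvd_mul (by norm_num)).mp h31 with h | h
      · norm_num at h
      · exact h
    exact ⟨31, by norm_num, h31n, good31⟩
  · -- 3 ∣ 2b + 1 : use 13
    have hsum := sigma_pp_dvd (Nat.prime_three) hn0 hperf h3.1 h3.2
    have h13 : (13 : ℕ) ∣ 2 * n := dvd_trans (dvd13 (2 * b + 1) hc) hsum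
    have h13n : (13 : ℕ) ∣ n := by
      rcases (Nat.Prime.dvd_mul (by norm_num)).mp h13 with h | h
      · norm_num at h
      · exact h
    exact ⟨13, by norm_num, h13n, good13⟩
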